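/- Let X, Y be nonnegative random variables with λ·E[X] > 1 for a constant λ > 0. Suppose α > 0 satisfies α = λ·E[e^{-αY} - e^{-α(X+Y)}] and α̃ > 0 satisfies α̃ = λ·E[1 - e^{-α̃X}]. Then α ≤ α̃. Consequently, if p ∈ (0,1) solves 1 - p = E[e^{-λpX}] (so that p·λ = α̃), then p·λ/α ≥ 1. -/

import Mathlib

open MeasureTheory Set

private lemma expF_deriv (u : ℝ) (hu : 0 < u) :
    HasDerivAt (fun v => (1 - Real.exp (-v)) / v)
      ((Real.exp (-u) * u - (1 - Real.exp (-u)) * 1) / u ^ 2) u := by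
  have h1 : HasDerivAt (fun v : ℝ => 1 - Real.exp (-v)) (Real.exp (-u)) u := by
    have h2 := (Real.hasDerivAt_exp (-u)).comp u (hasDerivAt_neg u)
    have := (hasDerivAt_const u (1:ℝ)).sub h2
    exact this.congr_deriv (by ring)
  exact h1.div (hasDerivAt_id u) hu.ne'

private lemma expF_strictAnti : StrictAntiOn (fun v => (1 - Real.exp (-v)) / v) (Ioi (0:ℝ)) := by
  apply strictAntiOn_of_deriv_neg (convex_Ioi 0)
  · exact ContinuousOn.div
      (by fun_prop)
      continuousOn_id (fun x hx => ne_of_gt hx)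
  · intro x hx
    rw [interior_Ioi] at hx
    have hx' : (0:ℝ) < x := hx
    rw [(expF_deriv x hx').deriv]
    apply div_neg_of_neg_of_pos _ (by positivity)
    have h := Real.add_one_lt_exp (ne_of_gt hx')
    have hexp : 0 < Real.exp (-x) := Real.exp_pos _
    have hprod : Real.exp (-x) * Real.exp x = 1 := by
      rw [← Real.exp_add]; simp
    nlinarith [mul_lt_mul_of_pos_left h hexp]

private lemma key_ineq {a b : ℝ} (ha : 0 < a) (hab : a < b) :
    a * (1 - Real.exp (-b)) < b * (1 - Real.exp (-a)) := by
  have h := expF_strictAnti (mem_Ioi.mpr ha) (mem_Ioi.mpr (ha.trans hab)) hab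
  simp only at h
  rw [div_lt_div_iff₀ (ha.trans hab) ha] at h
  linarith [h]

private lemma pointwise_ineq {γ α x : ℝ} (hγ : 0 < γ) (hγα : γ < α) (hx : 0 ≤ x) :
    γ * (1 - Real.exp (-α * x)) ≤ α * (1 - Real.exp (-γ * x)) := by
  rcases eq_or_lt_of_le hx with h | h
  · simp [← h]
  · have := key_ineq (mul_pos hγ h) (by nlinarith : γ * x < α * x)
    have hx' : (0:ℝ) < x := h
    rw [neg_mul, neg_mul] at *
    nlinarith

private lemma pointwise_strict {γ α x : ℝ} (hγ : 0 < γ) (hγα : γ < α) (hx : 0 < x) :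
    γ * (1 - Real.exp (-α * x)) < α * (1 - Real.exp (-γ * x)) := by
  have := key_ineq (mul_pos hγ hx) (by nlinarith : γ * x < α * x)
  rw [neg_mul, neg_mul] at *
  nlinarith

private lemma integrable_bdd {Ω : Type*} [MeasurableSpace Ω] (μ : Measure Ω)
    [IsProbabilityMeasure μ] (f : Ω → ℝ) (hf : Measurable f) (C : ℝ)
    (h : ∀ ω, |f ω| ≤ C) : Integrable f μ :=
  Integrable.mono' (integrable_const C) hf.aestronglyMeasurable (ae_of_all _ h)

private lemma one_sub_exp_bdd {s x : ℝ} (hs : 0 < s) (hx : 0 ≤ x) :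
    |1 - Real.exp (-s * x)| ≤ 1 := by
  have h1 : Real.exp (-s * x) ≤ 1 := by
    apply Real.exp_le_one_iff.mpr; nlinarith
  have h2 : 0 < Real.exp (-s * x) := Real.exp_pos _
  rw [abs_le]; constructor <;> nlinarith

private lemma main_aux {Ω : Type*} [MeasurableSpace Ω] (μ : Measure Ω) [IsProbabilityMeasure μ]
    (X : Ω → ℝ) (hX : Measurable X) (hXpos : ∀ ω, 0 ≤ X ω)
    (hsupp : 0 < μ {ω | 0 < X ω})
    (lam α γ : ℝ) (hlam : 0 < lam) (hα : 0 < α) (hγ : 0 < γ)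
    (hαle : α ≤ lam * ∫ ω, (1 - Real.exp (-α * X ω)) ∂μ)
    (hγeq : γ = lam * ∫ ω, (1 - Real.exp (-γ * X ω)) ∂μ) :
    α ≤ γ := by
  by_contra hlt
  push_neg at hlt
  set Gα := ∫ ω, (1 - Real.exp (-α * X ω)) ∂μ with hGα
  set Gγ := ∫ ω, (1 - Real.exp (-γ * X ω)) ∂μ with hGγ
  have hintα : Integrable (fun ω => 1 - Real.exp (-α * X ω)) μ :=
    integrable_bdd μ _ (by fun_prop) 1 (fun ω => one_sub_exp_bdd hα (hXpos ω))
  have hintγ : Integrable (fun ω => 1 - Real.exp (-γ * X ω)) μ :=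
    integrable_bdd μ _ (by fun_prop) 1 (fun ω => one_sub_exp_bdd hγ (hXpos ω))
  -- the difference function
  set d : Ω → ℝ := fun ω => α * (1 - Real.exp (-γ * X ω)) - γ * (1 - Real.exp (-α * X ω)) with hd
  have hdint : Integrable d μ := ((hintγ.const_mul α).sub (hintα.const_mul γ))
  have hdnn : ∀ ω, 0 ≤ d ω := fun ω => sub_nonneg.mpr (pointwise_ineq hγ hlt (hXpos ω))
  have hdpos : ∀ ω, 0 < X ω → 0 < d ω := fun ω hx =>
    sub_pos.mpr (pointwise_strict hγ hlt hx)
  have hsub : {ω | 0 < X ω} ⊆ Function.support d := fun ω hx => (hdpos ω hx).ne'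
  have hI : 0 < ∫ ω, d ω ∂μ := by
    rw [integral_pos_iff_support_of_nonneg hdnn hdint]
    exact lt_of_lt_of_le hsupp (measure_mono hsub)
  have hIeq : ∫ ω, d ω ∂μ = α * Gγ - γ * Gα := by
    rw [hd]
    rw [integral_sub (hintγ.const_mul α) (hintα.const_mul γ),
      integral_const_mul, integral_const_mul]
  have h1 : γ * Gα < α * Gγ := by linarith [hIeq ▸ hI]
  have h2 : γ * α ≤ γ * (lam * Gα) := by
    apply mul_le_mul_of_nonneg_left hαle hγ.le
  have h3 : lam * (γ * Gα) < lam * (α * Gγ) := by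
    exact mul_lt_mul_of_pos_left h1 hlam
  nlinarith [hγeq]

theorem malthus_le_no_latent
    {Ω : Type*} [MeasurableSpace Ω] (μ : Measure Ω) [IsProbabilityMeasure μ]
    (X Y : Ω → ℝ) (hX : Measurable X) (hY : Measurable Y)
    (hXpos : ∀ ω, 0 ≤ X ω) (hYpos : ∀ ω, 0 ≤ Y ω)
    (hXint : Integrable X μ)
    (lam : ℝ) (hlam : 0 < lam) (hR0 : 1 < lam * ∫ ω, X ω ∂μ)
    (α αt : ℝ) (hα : 0 < α) (hαt : 0 < αt)
    (hαeq : α = lam * ∫ ω, (Real.exp (-α * Y ω) - Real.exp (-α * (X ω + Y ω))) ∂μ)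
    (hαteq : αt = lam * ∫ ω, (1 - Real.exp (-αt * X ω)) ∂μ) :
    α ≤ αt ∧
      ∀ p : ℝ, p ∈ Ioo (0:ℝ) 1 →
        1 - p = ∫ ω, Real.exp (-(lam * p) * X ω) ∂μ → 1 ≤ p * lam / α := by
  -- μ {X > 0} is positive
  have hsupp : 0 < μ {ω | 0 < X ω} := by
    by_contra h
    push_neg at h
    have h0 : μ {ω | 0 < X ω} = 0 := le_antisymm h (zero_le)
    have hae : X =ᵐ[μ] (fun _ => 0) := by
      refine measure_mono_null (fun ω hω => ?_) h0
      simp only [mem_setOf_eq] at hω ⊢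
      exact lt_of_le_of_ne (hXpos ω) (Ne.symm hω)
    have : ∫ ω, X ω ∂μ = 0 := by
      rw [integral_congr_ae hae]; simp
    rw [this] at hR0; simp at hR0; linarith
  -- step 1: α ≤ lam * ∫ (1 - exp (-α X))
  have hαle : α ≤ lam * ∫ ω, (1 - Real.exp (-α * X ω)) ∂μ := by
    have hstep : (∫ ω, (Real.exp (-α * Y ω) - Real.exp (-α * (X ω + Y ω))) ∂μ)
        ≤ ∫ ω, (1 - Real.exp (-α * X ω)) ∂μ := by
      apply integral_mono
      · apply integrable_bdd μ _ (by fun_prop) 1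
        intro ω
        have h1 : Real.exp (-α * (X ω + Y ω)) ≤ Real.exp (-α * Y ω) := by
          apply Real.exp_le_exp.mpr; nlinarith [hXpos ω]
        have h2 : Real.exp (-α * Y ω) ≤ 1 := by
          apply Real.exp_le_one_iff.mpr; nlinarith [hYpos ω]
        have h3 : 0 < Real.exp (-α * (X ω + Y ω)) := Real.exp_pos _
        rw [abs_le]; constructor <;> nlinarith
      · apply integrable_bdd μ _ (by fun_prop) 1
        exact fun ω => one_sub_exp_bdd hα (hXpos ω)
      · intro ω
        have hexpY : Real.exp (-α * Y ω) ≤ 1 := by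
          apply Real.exp_le_one_iff.mpr; nlinarith [hYpos ω]
        have hXe : Real.exp (-α * X ω) ≤ 1 := by
          apply Real.exp_le_one_iff.mpr; nlinarith [hXpos ω]
        have key : Real.exp (-α * (X ω + Y ω)) = Real.exp (-α * Y ω) * Real.exp (-α * X ω) := by
          rw [← Real.exp_add]; ring_nf
        have hY0 : 0 < Real.exp (-α * Y ω) := Real.exp_pos _
        show Real.exp (-α * Y ω) - Real.exp (-α * (X ω + Y ω)) ≤ 1 - Real.exp (-α * X ω)
        rw [key]
        nlinarith
    calc α = lam * ∫ ω, (Real.exp (-α * Y ω) - Real.exp (-α * (X ω + Y ω))) ∂μ := hαeq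
      _ ≤ lam * ∫ ω, (1 - Real.exp (-α * X ω)) ∂μ :=
          mul_le_mul_of_nonneg_left hstep hlam.le
  constructor
  · exact main_aux μ X hX hXpos hsupp lam α αt hlam hα hαt hαle hαteq
  · intro p hp hpeq
    have hγ : 0 < lam * p := mul_pos hlam hp.1
    have hintp : Integrable (fun ω => Real.exp (-(lam * p) * X ω)) μ := by
      apply integrable_bdd μ _ (by fun_prop) 1
      intro ω
      have h1 : Real.exp (-(lam * p) * X ω) ≤ 1 := by
        apply Real.exp_le_one_iff.mpr; nlinarith [hXpos ω]
      have h2 : 0 < Real.exp (-(lam * p) * X ω) := Real.exp_pos _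
      rw [abs_le]; constructor <;> nlinarith
    have hpeq2 : lam * p = lam * ∫ ω, (1 - Real.exp (-(lam * p) * X ω)) ∂μ := by
      have : ∫ ω, (1 - Real.exp (-(lam * p) * X ω)) ∂μ
          = 1 - ∫ ω, Real.exp (-(lam * p) * X ω) ∂μ := by
        rw [integral_sub (integrable_const 1) hintp]
        simp
      rw [this, ← hpeq]
      ring
    have hle := main_aux μ X hX hXpos hsupp lam α (lam * p) hlam hα hγ hαle hpeq2
    rw [le_div_iff₀ hα, one_mul]
    linarith
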